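/- Let u, u_Δ : ℝ → ℝ be bounded continuous functions, y, y_Δ : ℝ → ℝ continuous increasing surjections, and U = u ∘ y, U_Δ = u_Δ ∘ y_Δ. Suppose there is a constant E ≥ 0 such that |u(x) − u(x')| ≤ E·|x − x'|^{1/2} for all x, x' (u is ½-Hölder with constant E). Then ‖u − u_Δ‖_∞ ≤ ‖U − U_Δ‖_∞ + E·‖y − y_Δ‖_∞^{1/2}. -/
import Mathlib


open MeasureTheory Set

/-- Transfer of sup-norm bounds from Lagrangian to Eulerian variables:
if `u` is `½`-Hölder with constant `E`, `y, y_Δ` are continuous increasing surjections,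
`U = u ∘ y`, `U_Δ = u_Δ ∘ y_Δ`, and `CU, Cy` bound `|U − U_Δ|` and `|y − y_Δ|`, then
`‖u − u_Δ‖_∞ ≤ CU + E·Cy^{1/2}`. -/
theorem eulerian_sup_bound_from_lagrangian
    (u uΔ : ℝ → ℝ) (y yΔ : ℝ → ℝ) (U UΔ : ℝ → ℝ) (E : ℝ)
    (huc : Continuous u) (huΔc : Continuous uΔ)
    (hub : ∃ M : ℝ, ∀ x, |u x| ≤ M) (huΔb : ∃ M : ℝ, ∀ x, |uΔ x| ≤ M)
    (hyc : Continuous y) (hyΔc : Continuous yΔ)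
    (hym : Monotone y) (hyΔm : Monotone yΔ)
    (hys : Function.Surjective y) (hyΔs : Function.Surjective yΔ)
    (hU : ∀ ξ, U ξ = u (y ξ)) (hUΔ : ∀ ξ, UΔ ξ = uΔ (yΔ ξ))
    (hE : 0 ≤ E)
    (hhold : ∀ x x' : ℝ, |u x - u x'| ≤ E * |x - x'| ^ ((1 : ℝ) / 2)) :
    ∀ CU Cy : ℝ, (∀ ξ, |U ξ - UΔ ξ| ≤ CU) → (∀ ξ, |y ξ - yΔ ξ| ≤ Cy) →
      ∀ x : ℝ, |u x - uΔ x| ≤ CU + E * Cy ^ ((1 : ℝ) / 2) := by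
  intro CU Cy hCU hCy x
  obtain ⟨ξ, hξ⟩ := hyΔs x
  have h1 : |u x - uΔ x| ≤ |u (yΔ ξ) - u (y ξ)| + |U ξ - UΔ ξ| := by
    rw [hU, hUΔ, ← hξ]
    calc |u (yΔ ξ) - uΔ (yΔ ξ)|
        = |(u (yΔ ξ) - u (y ξ)) + (u (y ξ) - uΔ (yΔ ξ))| := by ring_nf
      _ ≤ _ := abs_add_le _ _
  have h2 : |u (yΔ ξ) - u (y ξ)| ≤ E * Cy ^ ((1 : ℝ) / 2) := by
    refine (hhold _ _).trans (mul_le_mul_of_nonneg_left ?_ hE)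
    have h3 : |yΔ ξ - y ξ| ≤ Cy := by rw [abs_sub_comm]; exact hCy ξ
    exact Real.rpow_le_rpow (abs_nonneg _) h3 (by norm_num)
  linarith [hCU ξ]
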